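/- Let X be a real normed linear space, a ∈ X with a ≠ 0, and x₁,…,xₙ ∈ X with ‖xⱼ − a‖ ≤ ‖a‖ for each j. Then for any pⱼ ≥ 0 with Σⱼ pⱼ = 1: ‖Σⱼ pⱼ•xⱼ‖·‖a‖ + (1/2)Σⱼ pⱼ‖xⱼ‖·‖xⱼ − a‖ ≥ (1/2)‖a‖·Σⱼ pⱼ‖xⱼ‖. -/

import Mathlib

theorem stmt6 {X : Type*} [NormedAddCommGroup X] [NormedSpace ℝ X]
    (n : ℕ) (x : Fin n → X) (a : X) (ha : a ≠ 0)
    (hx : ∀ j, ‖x j - a‖ ≤ ‖a‖)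
    (p : Fin n → ℝ) (hp : ∀ j, 0 ≤ p j) (hp1 : ∑ j, p j = 1) :
    ‖∑ j, p j • x j‖ * ‖a‖ + (1 / 2) * ∑ j, p j * ‖x j‖ * ‖x j - a‖ ≥
      (1 / 2) * ‖a‖ * ∑ j, p j * ‖x j‖ := by
  obtain ⟨f, hf1, hfa⟩ := exists_dual_vector ℝ a (norm_ne_zero_iff.mpr ha)
  have hfa' : f a = ‖a‖ := hfa
  have key : ∀ j, p j * ‖x j‖ * ‖a‖ - p j * ‖x j‖ * ‖x j - a‖ ≤
      2 * (p j * (‖a‖ * f (x j))) := by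
    intro j
    have h1 : f (a - x j) ≤ ‖x j - a‖ := by
      calc f (a - x j) ≤ ‖f‖ * ‖a - x j‖ := (le_abs_self _).trans (f.le_opNorm _)
        _ = ‖x j - a‖ := by rw [hf1, norm_sub_rev]; ring
    have h2 : ‖a‖ - ‖x j - a‖ ≤ f (x j) := by
      have := f.map_sub a (x j)
      rw [hfa'] at this; linarith
    have h3 : ‖x j‖ ≤ ‖a‖ + ‖x j - a‖ := by
      calc ‖x j‖ = ‖(x j - a) + a‖ := by rw [sub_add_cancel]
        _ ≤ ‖x j - a‖ + ‖a‖ := norm_add_le _ _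
        _ = ‖a‖ + ‖x j - a‖ := by ring
    have h4 := hx j
    have h5 := hp j
    have h6 : 0 ≤ ‖x j - a‖ := norm_nonneg _
    nlinarith [mul_le_mul_of_nonneg_left h2 h5, norm_nonneg (x j),
      mul_nonneg h5 (sub_nonneg.2 h4)]
  have hsum : ∑ j, (p j * ‖x j‖ * ‖a‖ - p j * ‖x j‖ * ‖x j - a‖) ≤
      ∑ j, 2 * (p j * (‖a‖ * f (x j))) := Finset.sum_le_sum fun j _ => key j
  have hf2 : f (∑ j, p j • x j) = ∑ j, p j * f (x j) := by
    rw [map_sum]; simp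
  have hle : f (∑ j, p j • x j) ≤ ‖∑ j, p j • x j‖ := by
    calc f (∑ j, p j • x j) ≤ ‖f‖ * ‖∑ j, p j • x j‖ := (le_abs_self _).trans (f.le_opNorm _)
      _ = ‖∑ j, p j • x j‖ := by rw [hf1, one_mul]
  have ha' : (0:ℝ) ≤ ‖a‖ := norm_nonneg a
  have expand : ∑ j, 2 * (p j * (‖a‖ * f (x j))) =
      2 * ‖a‖ * ∑ j, p j * f (x j) := by
    rw [Finset.mul_sum]; congr 1; ext j; ring
  rw [Finset.sum_sub_distrib] at hsum
  rw [← Finset.sum_mul] at hsum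
  have hmul : 2 * ‖a‖ * ∑ j, p j * f (x j) ≤ 2 * ‖a‖ * ‖∑ j, p j • x j‖ := by
    apply mul_le_mul_of_nonneg_left _ (by positivity)
    rw [← hf2]; exact hle
  rw [expand] at hsum
  nlinarith [hsum, hmul]
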